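/- Tensor positivity: for any probability measure p on ℝⁿ with finite sixth moments and positive semidefinite symmetric matrices A₁, A₂, A₃, the tensor T_p(A₁,A₂,A₃) := E_{x,y∼p}[(xᵀA₁y)(xᵀA₂y)(xᵀA₃y)] (x, y independent) is nonnegative. -/

import Mathlib

open MeasureTheory Matrix
open scoped MatrixOrder

section Aux

variable {n : ℕ}

lemma trace_conj_nonneg (A₁ A₂ Δ : Matrix (Fin n) (Fin n) ℝ)
    (h₁ : A₁.PosSemidef) (h₂ : A₂.PosSemidef) :
    0 ≤ (A₁ * Δ * A₂ * Δᵀ).trace := by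
  set C := CFC.sqrt A₁ with hC
  set D := CFC.sqrt A₂ with hD
  have hCs : Cᵀ = C := by simpa [IsHermitian] using (nonneg_iff_posSemidef.mp (CFC.sqrt_nonneg A₁)).1
  have hDs : Dᵀ = D := by simpa [IsHermitian] using (nonneg_iff_posSemidef.mp (CFC.sqrt_nonneg A₂)).1
  have e1 : A₁ = C * C := (CFC.sqrt_mul_sqrt_self A₁ (nonneg_iff_posSemidef.mpr h₁)).symm
  have e2 : A₂ = D * D := (CFC.sqrt_mul_sqrt_self A₂ (nonneg_iff_posSemidef.mpr h₂)).symm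
  have key : (A₁ * Δ * A₂ * Δᵀ).trace = ((C * Δ * D) * (C * Δ * D)ᵀ).trace := by
    calc (A₁ * Δ * A₂ * Δᵀ).trace
        = (C * (C * Δ * (D * (D * Δᵀ)))).trace := by rw [e1, e2]; simp only [mul_assoc]
      _ = ((C * Δ * (D * (D * Δᵀ))) * C).trace := trace_mul_comm _ _
      _ = ((C * Δ * D) * (C * Δ * D)ᵀ).trace := by
          simp only [transpose_mul, hCs, hDs, mul_assoc]
  rw [key, trace]
  apply Finset.sum_nonneg
  intro i _
  simp only [diag_apply, mul_apply, transpose_apply]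
  exact Finset.sum_nonneg fun j _ => mul_self_nonneg _

lemma sum_mul_sum_mul_sum (f g h : Fin n → ℝ) :
    (∑ a, f a) * (∑ c, g c) * (∑ e, h e) = ∑ a, ∑ c, ∑ e, f a * g c * h e := by
  rw [Fintype.sum_mul_sum f g, Finset.sum_mul]
  refine Finset.sum_congr rfl fun a _ => ?_
  rw [Finset.sum_mul]
  refine Finset.sum_congr rfl fun c _ => ?_
  rw [Finset.mul_sum]

lemma expand3 (u v w y : Fin n → ℝ) :
    (u ⬝ᵥ y) * (v ⬝ᵥ y) * (w ⬝ᵥ y) =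
      ∑ q : Fin n × Fin n × Fin n,
        (u q.1 * v q.2.1 * w q.2.2) * (y q.1 * y q.2.1 * y q.2.2) := by
  simp only [dotProduct]
  rw [sum_mul_sum_mul_sum]
  simp only [Fintype.sum_prod_type]
  refine Finset.sum_congr rfl fun b _ => Finset.sum_congr rfl fun d _ =>
    Finset.sum_congr rfl fun f _ => by ring

lemma key_alg (A₁ A₂ A₃ : Matrix (Fin n) (Fin n) ℝ)
    (h₁ : A₁.PosSemidef) (h₂ : A₂.PosSemidef) (h₃ : A₃.PosSemidef)
    (M : Fin n → Fin n → Fin n → ℝ) :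
    0 ≤ ∑ q : Fin n × Fin n × Fin n,
        (∑ r : Fin n × Fin n × Fin n,
          (A₁ r.1 q.1 * A₂ r.2.1 q.2.1 * A₃ r.2.2 q.2.2) * M r.1 r.2.1 r.2.2)
          * M q.1 q.2.1 q.2.2 := by
  set B := CFC.sqrt A₃ with hB
  have hBs : ∀ e f, B e f = B f e := by
    intro e f
    have h := (nonneg_iff_posSemidef.mp (CFC.sqrt_nonneg A₃)).1
    have := congrFun (congrFun h f) e
    simpa using this
  have hA3 : ∀ e f, A₃ e f = ∑ i, B e i * B f i := by
    intro e f
    rw [← CFC.sqrt_mul_sqrt_self A₃ (nonneg_iff_posSemidef.mpr h₃)]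
    simp only [mul_apply, ← hB]
    exact Finset.sum_congr rfl fun i _ => by rw [hBs i f]
  have h₁s : ∀ i j, A₁ i j = A₁ j i := by
    intro i j
    have := congrFun (congrFun h₁.1 j) i
    simpa using this
  set Δ : Fin n → Matrix (Fin n) (Fin n) ℝ :=
    fun i => Matrix.of (fun a c => ∑ e, M a c e * B e i) with hΔ
  have main : (∑ q : Fin n × Fin n × Fin n,
        (∑ r : Fin n × Fin n × Fin n,
          (A₁ r.1 q.1 * A₂ r.2.1 q.2.1 * A₃ r.2.2 q.2.2) * M r.1 r.2.1 r.2.2)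
          * M q.1 q.2.1 q.2.2)
      = ∑ i, (A₁ * Δ i * A₂ * (Δ i)ᵀ).trace := by
    simp only [Fintype.sum_prod_type, Finset.sum_mul]
    simp only [trace, diag_apply, mul_apply, transpose_apply, hΔ, Matrix.of_apply,
      Finset.sum_mul, Finset.mul_sum]
    conv_rhs => rw [Finset.sum_comm]
    refine Finset.sum_congr rfl fun p1 _ => ?_
    conv_rhs => rw [Finset.sum_comm]
    refine Finset.sum_congr rfl fun p2 _ => ?_
    conv_rhs => rw [Finset.sum_comm]
    refine Finset.sum_congr rfl fun p3 _ => ?_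
    conv_lhs => rw [Finset.sum_comm]
    conv_rhs => rw [Finset.sum_comm]
    refine Finset.sum_congr rfl fun p4 _ => ?_
    conv_rhs => rw [Finset.sum_comm]
    refine Finset.sum_congr rfl fun p5 _ => ?_
    conv_rhs => rw [Finset.sum_comm]
    refine Finset.sum_congr rfl fun p6 _ => ?_
    rw [hA3 p6 p3, h₁s p5 p1]
    simp only [Finset.mul_sum, Finset.sum_mul]
    exact Finset.sum_congr rfl fun I _ => by ring
  rw [main]
  exact Finset.sum_nonneg fun i _ => trace_conj_nonneg _ _ _ h₁ h₂

end Aux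

/-- Tensor positivity: for a probability measure `p` on `ℝⁿ` with finite sixth
moments and positive semidefinite symmetric matrices `A₁, A₂, A₃`, the tensor
`T_p(A₁,A₂,A₃) = E_{x,y∼p}[(xᵀA₁y)(xᵀA₂y)(xᵀA₃y)]` (with `x, y` independent)
is nonnegative. -/
theorem tensor_nonneg (n : ℕ) (p : Measure (Fin n → ℝ)) [IsProbabilityMeasure p]
    (hmom6 : Integrable (fun x : Fin n → ℝ => ‖x‖ ^ 6) p)
    (A₁ A₂ A₃ : Matrix (Fin n) (Fin n) ℝ)
    (h₁ : A₁.PosSemidef) (h₂ : A₂.PosSemidef) (h₃ : A₃.PosSemidef) :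
    0 ≤ ∫ x, ∫ y, (x ⬝ᵥ A₁ *ᵥ y) * (x ⬝ᵥ A₂ *ᵥ y) * (x ⬝ᵥ A₃ *ᵥ y) ∂p ∂p := by
  have key : ∀ (x : Fin n → ℝ) (i : Fin n), |x i| ≤ ‖x‖ := fun x i => by
    simpa using norm_le_pi_norm x i
  have hInt3 : Integrable (fun x : Fin n → ℝ => ‖x‖ ^ 3) p := by
    refine Integrable.mono' ((integrable_const (1 : ℝ)).add hmom6) ?_ ?_
    · exact (continuous_norm.pow 3).aestronglyMeasurable
    · refine Filter.Eventually.of_forall fun x => ?_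
      have h0 : (0 : ℝ) ≤ ‖x‖ := norm_nonneg x
      rw [Real.norm_eq_abs, abs_of_nonneg (by positivity)]
      simp only [Pi.add_apply]
      nlinarith [sq_nonneg (‖x‖ ^ 3 - 1), pow_nonneg h0 3, pow_nonneg h0 6]
  have hM : ∀ a c e : Fin n, Integrable (fun x : Fin n → ℝ => x a * x c * x e) p := by
    intro a c e
    refine hInt3.mono' ?_ ?_
    · exact (((measurable_pi_apply a).mul (measurable_pi_apply c)).mul
        (measurable_pi_apply e)).aestronglyMeasurable
    · refine Filter.Eventually.of_forall fun x => ?_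
      rw [Real.norm_eq_abs, abs_mul, abs_mul]
      calc |x a| * |x c| * |x e| ≤ ‖x‖ * ‖x‖ * ‖x‖ := by
            have ha := key x a; have hc := key x c; have he := key x e
            have h0c := abs_nonneg (x c); have h0e := abs_nonneg (x e)
            exact mul_le_mul (mul_le_mul ha hc h0c (norm_nonneg x)) he h0e
              (by positivity)
        _ = ‖x‖ ^ 3 := by ring
  set M : Fin n → Fin n → Fin n → ℝ := fun a c e => ∫ x, x a * x c * x e ∂p with hMdef
  have inner_eq : ∀ x : Fin n → ℝ,
      (∫ y, (x ⬝ᵥ A₁ *ᵥ y) * (x ⬝ᵥ A₂ *ᵥ y) * (x ⬝ᵥ A₃ *ᵥ y) ∂p)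
      = ∑ q : Fin n × Fin n × Fin n,
          ((x ᵥ* A₁) q.1 * (x ᵥ* A₂) q.2.1 * (x ᵥ* A₃) q.2.2) * M q.1 q.2.1 q.2.2 := by
    intro x
    have hpt : ∀ y : Fin n → ℝ, (x ⬝ᵥ A₁ *ᵥ y) * (x ⬝ᵥ A₂ *ᵥ y) * (x ⬝ᵥ A₃ *ᵥ y)
        = ∑ q : Fin n × Fin n × Fin n,
          ((x ᵥ* A₁) q.1 * (x ᵥ* A₂) q.2.1 * (x ᵥ* A₃) q.2.2)
            * (y q.1 * y q.2.1 * y q.2.2) := by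
      intro y
      rw [dotProduct_mulVec, dotProduct_mulVec, dotProduct_mulVec]
      exact expand3 _ _ _ y
    simp_rw [hpt]
    rw [integral_finset_sum _ fun q _ => (hM q.1 q.2.1 q.2.2).const_mul _]
    refine Finset.sum_congr rfl fun q _ => ?_
    rw [integral_const_mul, hMdef]
  have hvec : ∀ (A : Matrix (Fin n) (Fin n) ℝ) (b : Fin n) (x : Fin n → ℝ),
      (x ᵥ* A) b = (fun a => A a b) ⬝ᵥ x := by
    intro A b x
    simp [vecMul, dotProduct, mul_comm]
  have hprod : ∀ (b d f : Fin n) (x : Fin n → ℝ),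
      (x ᵥ* A₁) b * (x ᵥ* A₂) d * (x ᵥ* A₃) f
      = ∑ r : Fin n × Fin n × Fin n,
          (A₁ r.1 b * A₂ r.2.1 d * A₃ r.2.2 f) * (x r.1 * x r.2.1 * x r.2.2) := by
    intro b d f x
    rw [hvec A₁ b x, hvec A₂ d x, hvec A₃ f x]
    exact expand3 _ _ _ x
  have hIntBig : ∀ b d f : Fin n,
      Integrable (fun x => (x ᵥ* A₁) b * (x ᵥ* A₂) d * (x ᵥ* A₃) f) p := by
    intro b d f
    have heq : (fun x : Fin n → ℝ => (x ᵥ* A₁) b * (x ᵥ* A₂) d * (x ᵥ* A₃) f)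
        = fun x => ∑ r : Fin n × Fin n × Fin n,
            (A₁ r.1 b * A₂ r.2.1 d * A₃ r.2.2 f) * (x r.1 * x r.2.1 * x r.2.2) :=
      funext (hprod b d f)
    rw [heq]
    exact integrable_finset_sum _ fun r _ => (hM r.1 r.2.1 r.2.2).const_mul _
  have hIntX : ∀ b d f : Fin n,
      (∫ x, (x ᵥ* A₁) b * (x ᵥ* A₂) d * (x ᵥ* A₃) f ∂p)
      = ∑ r : Fin n × Fin n × Fin n,
          (A₁ r.1 b * A₂ r.2.1 d * A₃ r.2.2 f) * M r.1 r.2.1 r.2.2 := by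
    intro b d f
    simp_rw [hprod b d f]
    rw [integral_finset_sum _ fun r _ => (hM r.1 r.2.1 r.2.2).const_mul _]
    refine Finset.sum_congr rfl fun r _ => ?_
    rw [integral_const_mul, hMdef]
  have total : (∫ x, ∫ y, (x ⬝ᵥ A₁ *ᵥ y) * (x ⬝ᵥ A₂ *ᵥ y) * (x ⬝ᵥ A₃ *ᵥ y) ∂p ∂p)
      = ∑ q : Fin n × Fin n × Fin n,
          (∑ r : Fin n × Fin n × Fin n,
            (A₁ r.1 q.1 * A₂ r.2.1 q.2.1 * A₃ r.2.2 q.2.2) * M r.1 r.2.1 r.2.2)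
            * M q.1 q.2.1 q.2.2 := by
    simp_rw [inner_eq]
    rw [integral_finset_sum _ fun q _ => (hIntBig q.1 q.2.1 q.2.2).mul_const _]
    refine Finset.sum_congr rfl fun q _ => ?_
    rw [integral_mul_const, hIntX]
  rw [total]
  exact key_alg A₁ A₂ A₃ h₁ h₂ h₃ M
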